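/- Let T = (S,Σ,κ) be an STS, μ a probability measure on S, and B ∈ Σ with avoid-set B̃ and B̃̃ the avoid-set of B̃. Define, for n ∈ ℕ, q_n^Yes = Prob_μ(F≤n B̃̃) and q_n^No = Prob_μ(F≤n B̃). If T is PD(μ,B) and D(μ,B̃), then the sequence (q_n^Yes) is nondecreasing, the sequence (1 − q_n^No) is nonincreasing, q_n^Yes ≤ 1 − q_n^No for all n, and both sequences converge to Prob_μ(GF B); in particular lim_{n→∞}(q_n^Yes + q_n^No) = 1. -/

import Mathlib

open MeasureTheory ProbabilityTheory ENNReal Filter Topology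

namespace STS

variable {S : Type*} [MeasurableSpace S]

/-- Probability of the cylinder `Cyl(A 0, …, A n)` for the Markov chain with kernel `κ`
and initial distribution `μ`. -/
noncomputable def cylProb (κ : Kernel S S) : ℕ → Measure S → (ℕ → Set S) → ℝ≥0∞
  | 0, μ, A => μ (A 0)
  | n + 1, μ, A => ∫⁻ s in A 0, cylProb κ n (κ s) (fun i => A (i + 1)) ∂μ

/-- `P` assigns to each initial (probability) distribution the path measure (on `ℕ → S`,
with the product σ-algebra) of the time-homogeneous Markov chain with transition kernel `κ`,
as given by the Ionescu–Tulcea construction: it is the unique probability measure giving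
cylinders their prescribed probabilities. -/
def IsPathMeasure (κ : Kernel S S) (P : Measure S → Measure (ℕ → S)) : Prop :=
  ∀ μ : Measure S, IsProbabilityMeasure μ →
    IsProbabilityMeasure (P μ) ∧
    ∀ (n : ℕ) (A : ℕ → Set S), (∀ i, MeasurableSet (A i)) →
      P μ {ρ | ∀ i ≤ n, ρ i ∈ A i} = cylProb κ n μ A

/-- The path event `F B`: eventually reach `B`. -/
def evF (B : Set S) : Set (ℕ → S) := {ρ | ∃ k, ρ k ∈ B}

/-- The path event `F≤n B`. -/
def evFle (n : ℕ) (B : Set S) : Set (ℕ → S) := {ρ | ∃ k ≤ n, ρ k ∈ B}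

/-- The path event `F≥p B`. -/
def evFge (p : ℕ) (B : Set S) : Set (ℕ → S) := {ρ | ∃ k, p ≤ k ∧ ρ k ∈ B}

/-- The path event `GF B`: visit `B` infinitely often. -/
def evGF (B : Set S) : Set (ℕ → S) := {ρ | ∀ n, ∃ k, n ≤ k ∧ ρ k ∈ B}

/-- The path event `FG B`: eventually stay in `B` forever. -/
def evFG (B : Set S) : Set (ℕ → S) := {ρ | ∃ n, ∀ k, n ≤ k → ρ k ∈ B}

/-- The until event `B' U B`. -/
def evU (B' B : Set S) : Set (ℕ → S) := {ρ | ∃ k, ρ k ∈ B ∧ ∀ j < k, ρ j ∈ B'}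

/-- The bounded until event `B' U≤n B`. -/
def evUle (n : ℕ) (B' B : Set S) : Set (ℕ → S) := {ρ | ∃ k ≤ n, ρ k ∈ B ∧ ∀ j < k, ρ j ∈ B'}

/-- The avoid-set `B̃` of `B`: states from which `B` is reached with probability `0`. -/
def avoid (P : Measure S → Measure (ℕ → S)) (B : Set S) : Set S :=
  {s | P (Measure.dirac s) (evF B) = 0}

/-- `T` is decisive w.r.t. `B` from `μ`. -/
def Decisive (P : Measure S → Measure (ℕ → S)) (μ : Measure S) (B : Set S) : Prop :=
  P μ (evF B ∪ evF (avoid P B)) = 1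

/-- `T` is strongly decisive w.r.t. `B` from `μ`. -/
def StronglyDecisive (P : Measure S → Measure (ℕ → S)) (μ : Measure S) (B : Set S) : Prop :=
  P μ (evGF B ∪ evF (avoid P B)) = 1

/-- `T` is persistently decisive w.r.t. `B` from `μ`. -/
def PersistentlyDecisive (P : Measure S → Measure (ℕ → S)) (μ : Measure S) (B : Set S) : Prop :=
  ∀ p : ℕ, P μ (evFge p B ∪ evFge p (avoid P B)) = 1

/-- `PreProb(B)`: measurable sets `B'` from which `B` is reached in one step with positive
probability, whatever the initial distribution concentrated on `B'`. -/
def PreProb (P : Measure S → Measure (ℕ → S)) (B : Set S) : Set (Set S) :=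
  {B' | MeasurableSet B' ∧ ∀ μ' : Measure S, IsProbabilityMeasure μ' → μ' B' = 1 →
    0 < P μ' {ρ | ρ 0 ∈ B' ∧ ρ 1 ∈ B}}

/-- `T` is fair w.r.t. `B` from `μ`. -/
def Fair (P : Measure S → Measure (ℕ → S)) (μ : Measure S) (B : Set S) : Prop :=
  ∀ B' ∈ PreProb P B, 0 < P μ (evGF B') →
    P μ (evGF B ∩ evGF B') = P μ (evGF B')

/-- The one-step measure transformer `Ω_T`. -/
noncomputable def Omega (κ : Kernel S S) (μ : Measure S) : Measure S :=
  μ.bind (fun s => κ s)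

/-- Two measures are qualitatively equivalent if they have the same null (measurable) sets. -/
def QualEquiv {T : Type*} [MeasurableSpace T] (μ ν : Measure T) : Prop :=
  ∀ A : Set T, MeasurableSet A → (μ A = 0 ↔ ν A = 0)

/-- `T₂ = (S₂,κ₂)` is an `α`-abstraction of `T₁ = (S₁,κ₁)`. -/
def IsAbstraction {S₁ S₂ : Type*} [MeasurableSpace S₁] [MeasurableSpace S₂]
    (κ₁ : Kernel S₁ S₁) (κ₂ : Kernel S₂ S₂) (α : S₁ → S₂) : Prop :=
  ∀ μ : Measure S₁, IsProbabilityMeasure μ →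
    QualEquiv (Measure.map α (Omega κ₁ μ)) (Omega κ₂ (Measure.map α μ))


set_option linter.unusedSectionVars false
set_option linter.unusedVariables false

section Aux

open Set

variable {S : Type*} [MeasurableSpace S]

/-- The π-system of initial-segment cylinders. -/
def cylSet (S : Type*) [MeasurableSpace S] : Set (Set (ℕ → S)) :=
  {E | ∃ (n : ℕ) (A : ℕ → Set S), (∀ i, MeasurableSet (A i)) ∧ E = {ρ | ∀ i ≤ n, ρ i ∈ A i}}

lemma isPiSystem_cylSet : IsPiSystem (cylSet S) := by
  rintro _ ⟨n, A, hA, rfl⟩ _ ⟨m, A', hA', rfl⟩ -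
  refine ⟨max n m, fun i => (if i ≤ n then A i else Set.univ) ∩ (if i ≤ m then A' i else Set.univ),
    fun i => MeasurableSet.inter (by split <;> [exact hA i; exact MeasurableSet.univ])
      (by split <;> [exact hA' i; exact MeasurableSet.univ]), ?_⟩
  ext ρ
  simp only [Set.mem_inter_iff, Set.mem_setOf_eq]
  constructor
  · rintro ⟨h1, h2⟩ i hi
    constructor
    · split
      · exact h1 i ‹_›
      · trivial
    · split
      · exact h2 i ‹_›
      · trivial
  · intro h
    constructor
    · intro i hi
      have := (h i (le_trans hi (le_max_left _ _))).1
      simpa [hi] using this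
    · intro i hi
      have := (h i (le_trans hi (le_max_right _ _))).2
      simpa [hi] using this

lemma measurableSet_cyl {n : ℕ} {A : ℕ → Set S} (hA : ∀ i, MeasurableSet (A i)) :
    MeasurableSet {ρ : ℕ → S | ∀ i ≤ n, ρ i ∈ A i} := by
  have : {ρ : ℕ → S | ∀ i ≤ n, ρ i ∈ A i} = ⋂ i ∈ Set.Iic n, (fun ρ : ℕ → S => ρ i) ⁻¹' A i := by
    ext ρ; simp [Set.mem_iInter]
  rw [this]
  exact MeasurableSet.biInter (Set.to_countable _)
    (fun i _ => (measurable_pi_apply i) (hA i))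

lemma generateFrom_cylSet :
    (MeasurableSpace.pi : MeasurableSpace (ℕ → S)) = MeasurableSpace.generateFrom (cylSet S) := by
  refine le_antisymm ?_ ?_
  · rw [MeasurableSpace.pi]
    refine iSup_le fun k => ?_
    rw [← measurable_iff_comap_le]
    intro t ht
    refine MeasurableSpace.measurableSet_generateFrom ⟨k, fun j => if j = k then t else Set.univ,
      fun j => by by_cases h : j = k <;> simp [h, ht], ?_⟩
    ext ρ
    simp only [Set.mem_preimage, Set.mem_setOf_eq]
    constructor
    · intro h i _
      split
      · subst ‹i = k›; exact h
      · trivial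
    · intro h
      have := h k le_rfl
      simpa using this
  · refine MeasurableSpace.generateFrom_le ?_
    rintro _ ⟨n, A, hA, rfl⟩
    exact measurableSet_cyl hA

end Aux
section CylProb

open Set

variable {S : Type*} [MeasurableSpace S] (κ : Kernel S S) [IsMarkovKernel κ]

lemma cylProb_zero (μ : Measure S) (A : ℕ → Set S) : cylProb κ 0 μ A = μ (A 0) := rfl

lemma cylProb_succ (n : ℕ) (μ : Measure S) (A : ℕ → Set S) :
    cylProb κ (n + 1) μ A = ∫⁻ s in A 0, cylProb κ n (κ s) (fun i => A (i + 1)) ∂μ := rfl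

lemma measurable_cylProb_kernel :
    ∀ (n : ℕ) (A : ℕ → Set S), (∀ i, MeasurableSet (A i)) → ∀ (η : Kernel S S), IsSFiniteKernel η →
      Measurable (fun s => cylProb κ n (η s) A) := by
  intro n
  induction n with
  | zero => intro A hA η _; exact η.measurable_coe (hA 0)
  | succ n ih =>
    intro A hA η hη
    haveI := hη
    simp only [cylProb_succ]
    have hf : Measurable fun t => cylProb κ n (κ t) (fun i => A (i + 1)) :=
      ih _ (fun i => hA (i + 1)) κ inferInstance
    exact Measurable.setLIntegral_kernel_prod_right
      (f := fun (_ : S) t => cylProb κ n (κ t) (fun i => A (i + 1)))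
      (hf.comp measurable_snd) (hA 0)

lemma measurable_cylProb_dirac {n : ℕ} {A : ℕ → Set S} (hA : ∀ i, MeasurableSet (A i)) :
    Measurable (fun s => cylProb κ n (Measure.dirac s) A) := by
  have := measurable_cylProb_kernel κ n A hA Kernel.id inferInstance
  simpa [Kernel.id_apply] using this

lemma cylProb_dirac_succ (n : ℕ) (s : S) {A : ℕ → Set S} (hA : ∀ i, MeasurableSet (A i)) :
    cylProb κ (n + 1) (Measure.dirac s) A
      = (A 0).indicator (fun t => cylProb κ n (κ t) (fun i => A (i + 1))) s := by
  rw [cylProb_succ]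
  classical
  rw [MeasureTheory.restrict_dirac' (hA 0)]
  have hf : Measurable fun t => cylProb κ n (κ t) (fun i => A (i + 1)) :=
    measurable_cylProb_kernel κ n _ (fun i => hA (i + 1)) κ inferInstance
  by_cases h : s ∈ A 0
  · simp [h, lintegral_dirac' s hf]
  · simp [h]

lemma cylProb_lintegral_dirac :
    ∀ (n : ℕ) {A : ℕ → Set S}, (∀ i, MeasurableSet (A i)) → ∀ (μ : Measure S),
      cylProb κ n μ A = ∫⁻ s, cylProb κ n (Measure.dirac s) A ∂μ := by
  intro n
  cases n with
  | zero =>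
    intro A hA μ
    simp only [cylProb_zero]
    rw [← lintegral_indicator_one (hA 0)]
    congr 1
    ext s
    rw [Measure.dirac_apply' _ (hA 0)]
  | succ n =>
    intro A hA μ
    rw [cylProb_succ]
    have hf : Measurable fun t => cylProb κ n (κ t) (fun i => A (i + 1)) :=
      measurable_cylProb_kernel κ n _ (fun i => hA (i + 1)) κ inferInstance
    rw [← lintegral_indicator (hA 0)]
    congr 1
    ext s
    rw [cylProb_dirac_succ κ n s hA]

lemma cylProb_bind {n : ℕ} {A : ℕ → Set S} (hA : ∀ i, MeasurableSet (A i))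
    (μ : Measure S) (η : Kernel S S) :
    cylProb κ n (μ.bind η) A = ∫⁻ s, cylProb κ n (η s) A ∂μ := by
  rw [cylProb_lintegral_dirac κ n hA,
    Measure.lintegral_bind η.measurable.aemeasurable (measurable_cylProb_dirac κ hA).aemeasurable]
  congr 1
  ext s
  rw [← cylProb_lintegral_dirac κ n hA]

/-- `k`-step transition kernel. -/
noncomputable def kpow (κ : Kernel S S) : ℕ → Kernel S S
  | 0 => Kernel.id
  | k + 1 => (kpow κ k) ∘ₖ κ

instance kpow_isMarkov (k : ℕ) : IsMarkovKernel (kpow κ k) := by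
  induction k with
  | zero => rw [kpow]; infer_instance
  | succ k ih => rw [kpow]; infer_instance

instance bind_kpow_prob (μ : Measure S) [IsProbabilityMeasure μ] (k : ℕ) :
    IsProbabilityMeasure (μ.bind (kpow κ k)) := by
  constructor
  rw [Measure.bind_apply MeasurableSet.univ (kpow κ k).measurable.aemeasurable]
  simp [measure_univ]

lemma cylProb_prefixUniv :
    ∀ (k : ℕ) (n : ℕ) (μ : Measure S) (A : ℕ → Set S), (∀ i, MeasurableSet (A i)) →
      cylProb κ (k + n) μ (fun i => if i < k then Set.univ else A (i - k))
        = cylProb κ n (μ.bind (kpow κ k)) A := by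
  intro k
  induction k with
  | zero =>
    intro n μ A hA
    have h1 : (fun i => if i < 0 then Set.univ else A (i - 0)) = A := by
      ext i : 1; simp
    have h2 : μ.bind ⇑(kpow κ 0) = μ := by
      show μ.bind ⇑(Kernel.id) = μ
      have : ⇑(Kernel.id : Kernel S S) = Measure.dirac := by
        ext s : 1; exact Kernel.id_apply s
      rw [this, Measure.bind_dirac]
    rw [h1, h2, Nat.zero_add]
  | succ k ih =>
    intro n μ A hA
    have he : k + 1 + n = (k + n) + 1 := by omega
    rw [he, cylProb_succ]
    have h0 : (if (0:ℕ) < k + 1 then Set.univ else A (0 - (k+1))) = Set.univ := by simp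
    rw [h0, Measure.restrict_univ]
    have hsh : (fun i => if i + 1 < k + 1 then Set.univ else A (i + 1 - (k + 1)))
        = fun i => if i < k then Set.univ else A (i - k) := by
      ext i : 1
      have : i + 1 - (k + 1) = i - k := by omega
      rw [this]
      by_cases h : i < k <;> simp [h]
    simp only [hsh]
    have : ∀ s, cylProb κ (k + n) (κ s) (fun i => if i < k then Set.univ else A (i - k))
        = cylProb κ n ((κ s).bind (kpow κ k)) A := fun s => ih n (κ s) A hA
    simp only [this]
    have hrhs : cylProb κ n (μ.bind ⇑(kpow κ (k+1))) A
        = ∫⁻ s, cylProb κ n ((kpow κ (k+1)) s) A ∂μ := cylProb_bind κ hA μ _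
    rw [hrhs]
    refine lintegral_congr fun s => ?_
    rw [show kpow κ (k+1) = (kpow κ k) ∘ₖ κ from rfl, Kernel.comp_apply]

end CylProb
section Markov

open Set

variable {S : Type*} [MeasurableSpace S] (κ : Kernel S S) [IsMarkovKernel κ]
  (P : Measure S → Measure (ℕ → S))

lemma measurableSet_evF {C : Set S} (hC : MeasurableSet C) : MeasurableSet (evF C) := by
  have : evF C = ⋃ k, (fun ρ : ℕ → S => ρ k) ⁻¹' C := by
    ext ρ; simp [evF]
  rw [this]
  exact MeasurableSet.iUnion fun k => (measurable_pi_apply k) hC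

lemma measurableSet_evFle {n : ℕ} {C : Set S} (hC : MeasurableSet C) :
    MeasurableSet (evFle n C) := by
  have : evFle n C = ⋃ k ∈ Set.Iic n, (fun ρ : ℕ → S => ρ k) ⁻¹' C := by
    ext ρ; simp [evFle]
  rw [this]
  exact MeasurableSet.biUnion (Set.to_countable _) fun k _ => (measurable_pi_apply k) hC

lemma measurableSet_evFge {p : ℕ} {C : Set S} (hC : MeasurableSet C) :
    MeasurableSet (evFge p C) := by
  have : evFge p C = ⋃ k ∈ Set.Ici p, (fun ρ : ℕ → S => ρ k) ⁻¹' C := by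
    ext ρ; simp [evFge]
  rw [this]
  exact MeasurableSet.biUnion (Set.to_countable _) fun k _ => (measurable_pi_apply k) hC

lemma measurableSet_evGF {C : Set S} (hC : MeasurableSet C) : MeasurableSet (evGF C) := by
  have : evGF C = ⋂ n, evFge n C := by
    ext ρ; simp [evGF, evFge]
  rw [this]
  exact MeasurableSet.iInter fun n => measurableSet_evFge hC

variable (hP : IsPathMeasure κ P)
include hP

lemma P_prob (μ : Measure S) [h : IsProbabilityMeasure μ] : IsProbabilityMeasure (P μ) :=
  (hP μ h).1

lemma P_cyl (μ : Measure S) [h : IsProbabilityMeasure μ] {n : ℕ} {A : ℕ → Set S}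
    (hA : ∀ i, MeasurableSet (A i)) :
    P μ {ρ | ∀ i ≤ n, ρ i ∈ A i} = cylProb κ n μ A :=
  (hP μ h).2 n A hA

lemma measurable_P_dirac_apply {E : Set (ℕ → S)} (hE : MeasurableSet E) :
    Measurable (fun s => P (Measure.dirac s) E) := by
  refine MeasurableSpace.induction_on_inter (C := fun E _ => Measurable
      (fun s => P (Measure.dirac s) E)) generateFrom_cylSet isPiSystem_cylSet ?_ ?_ ?_ ?_ E hE
  · simp only [measure_empty]; exact measurable_const
  · rintro _ ⟨n, A, hA, rfl⟩
    have : (fun s => P (Measure.dirac s) {ρ | ∀ i ≤ n, ρ i ∈ A i})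
        = fun s => cylProb κ n (Measure.dirac s) A := by
      ext s : 1
      exact P_cyl κ P hP (Measure.dirac s) hA
    rw [this]
    exact measurable_cylProb_dirac κ hA
  · intro t ht h
    have : (fun s => P (Measure.dirac s) tᶜ) = fun s => 1 - P (Measure.dirac s) t := by
      ext s : 1
      haveI := P_prob κ P hP (Measure.dirac s)
      exact prob_compl_eq_one_sub ht
    rw [this]
    exact measurable_const.sub h
  · intro f hdisj hmeas h
    have : (fun s => P (Measure.dirac s) (⋃ i, f i))
        = fun s => ∑' i, P (Measure.dirac s) (f i) := by
      ext s : 1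
      exact measure_iUnion hdisj hmeas
    rw [this]
    exact Measurable.ennreal_tsum h

lemma measurable_P_dirac : Measurable (fun s => P (Measure.dirac s)) :=
  Measure.measurable_of_measurable_coe _ fun E hE => measurable_P_dirac_apply κ P hP hE

lemma measurableSet_avoid {C : Set S} (hC : MeasurableSet C) :
    MeasurableSet (avoid P C) := by
  have : avoid P C = (fun s => P (Measure.dirac s) (evF C)) ⁻¹' {0} := by
    ext s; simp [avoid]
  rw [this]
  exact measurable_P_dirac_apply κ P hP (measurableSet_evF hC) (measurableSet_singleton 0)

/-- The Markov property at time `k`. -/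
lemma markov (k : ℕ) {C : Set S} (hC : MeasurableSet C) {E : Set (ℕ → S)}
    (hE : MeasurableSet E) (μ : Measure S) [IsProbabilityMeasure μ] :
    P μ {ρ | ρ k ∈ C ∧ (fun i => ρ (k + i)) ∈ E}
      = ∫⁻ s in C, P (Measure.dirac s) E ∂(μ.bind (kpow κ k)) := by
  haveI := P_prob κ P hP μ
  set θ : (ℕ → S) → (ℕ → S) := fun ρ i => ρ (k + i) with hθ
  have hθm : Measurable θ := measurable_pi_lambda _ fun i => measurable_pi_apply _
  set ν : Measure S := μ.bind (kpow κ k) with hν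
  haveI : IsProbabilityMeasure ν := bind_kpow_prob κ μ k
  have hCk : MeasurableSet {ρ : ℕ → S | ρ k ∈ C} := (measurable_pi_apply k) hC
  set L : Measure (ℕ → S) := ((P μ).restrict {ρ | ρ k ∈ C}).map θ with hL
  set R : Measure (ℕ → S) := (ν.restrict C).bind (fun s => P (Measure.dirac s)) with hR
  have hLapp : ∀ {E' : Set (ℕ → S)}, MeasurableSet E' →
      L E' = P μ {ρ | ρ k ∈ C ∧ θ ρ ∈ E'} := by
    intro E' hE'
    rw [hL, Measure.map_apply hθm hE', Measure.restrict_apply (hθm hE')]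
    congr 1
    ext ρ
    simp only [Set.mem_inter_iff, Set.mem_preimage, Set.mem_setOf_eq]
    tauto
  have hRapp : ∀ {E' : Set (ℕ → S)}, MeasurableSet E' →
      R E' = ∫⁻ s in C, P (Measure.dirac s) E' ∂ν := by
    intro E' hE'
    rw [hR, Measure.bind_apply hE' (measurable_P_dirac κ P hP).aemeasurable]
  -- key computation on cylinders
  have key : ∀ (n : ℕ) (A : ℕ → Set S), (∀ i, MeasurableSet (A i)) →
      P μ ({ρ | ρ k ∈ C} ∩ θ ⁻¹' {ρ | ∀ i ≤ n, ρ i ∈ A i})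
        = ∫⁻ s in C, cylProb κ n (Measure.dirac s) A ∂ν := by
    intro n A hA
    classical
    set A₃ : ℕ → Set S := fun j => if j = 0 then C ∩ A 0 else A j with hA₃
    have hA₃m : ∀ j, MeasurableSet (A₃ j) := by
      intro j
      rw [hA₃]
      by_cases h : j = 0 <;> simp [h, (hC.inter (hA 0)), hA j]
    have hseteq : {ρ : ℕ → S | ρ k ∈ C} ∩ θ ⁻¹' {ρ | ∀ i ≤ n, ρ i ∈ A i}
        = {ρ | ∀ i ≤ k + n, ρ i ∈ (fun i => if i < k then Set.univ else A₃ (i - k)) i} := by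
      ext ρ
      simp only [Set.mem_inter_iff, Set.mem_preimage, Set.mem_setOf_eq, hθ]
      constructor
      · rintro ⟨h1, h2⟩ i hi
        by_cases hik : i < k
        · simp [hik]
        · have hk : k ≤ i := le_of_not_gt hik
          simp only [hik, if_false]
          rcases Nat.eq_or_lt_of_le hk with h | h
          · subst h
            simp only [Nat.sub_self, hA₃, if_pos rfl]
            exact ⟨h1, by simpa using h2 0 (Nat.zero_le n)⟩
          · have hiz : i - k ≠ 0 := by omega
            simp only [hA₃, hiz, if_false]
            have h3 := h2 (i - k) (by omega)
            rwa [show k + (i - k) = i by omega] at h3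
      · intro h
        have hk0 : ρ k ∈ C ∩ A 0 := by
          have := h k (by omega)
          simpa [hA₃] using this
        refine ⟨hk0.1, ?_⟩
        intro i hi
        by_cases hi0 : i = 0
        · subst hi0; simpa using hk0.2
        · have := h (k + i) (by omega)
          have hik : ¬ (k + i < k) := by omega
          have hsub : k + i - k = i := by omega
          simpa [hik, hsub, hA₃, hi0] using this
    rw [hseteq, P_cyl κ P hP μ (by
      intro i
      by_cases h : i < k <;> simp [h, hA₃m (i - k)]),
      cylProb_prefixUniv κ k n μ A₃ hA₃m, ← hν]
    -- now: cylProb κ n ν A₃ = ∫⁻ s in C, cylProb κ n (dirac s) A ∂ν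
    rw [cylProb_lintegral_dirac κ n hA₃m ν, ← lintegral_indicator hC]
    refine lintegral_congr fun s => ?_
    by_cases hs : s ∈ C
    · rw [Set.indicator_of_mem hs]
      cases n with
      | zero =>
        show Measure.dirac s (A₃ 0) = Measure.dirac s (A 0)
        rw [Measure.dirac_apply' _ (hA₃m 0), Measure.dirac_apply' _ (hA 0)]
        simp [hA₃, Set.indicator, hs]
      | succ n =>
        rw [cylProb_dirac_succ κ n s hA₃m, cylProb_dirac_succ κ n s hA]
        have hsh : (fun i => A₃ (i + 1)) = fun i => A (i + 1) := by
          ext i : 1; simp [hA₃]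
        rw [hsh]
        simp only [Set.indicator, hA₃, if_pos rfl]
        by_cases h0 : s ∈ A 0
        · simp [h0, hs]
        · simp [h0, hs]
    · rw [Set.indicator_of_notMem hs]
      cases n with
      | zero =>
        show Measure.dirac s (A₃ 0) = 0
        rw [Measure.dirac_apply' _ (hA₃m 0)]
        simp [hA₃, Set.indicator, hs]
      | succ n =>
        rw [cylProb_dirac_succ κ n s hA₃m]
        simp only [Set.indicator, hA₃, if_pos rfl]
        have : s ∉ C ∩ A 0 := fun h => hs h.1
        simp [this]
  have hLR : L = R := by
    refine ext_of_generate_finite (cylSet S) generateFrom_cylSet isPiSystem_cylSet ?_ ?_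
    · rintro _ ⟨n, A, hA, rfl⟩
      rw [hLapp (measurableSet_cyl hA), hRapp (measurableSet_cyl hA)]
      have : ∀ s, P (Measure.dirac s) {ρ | ∀ i ≤ n, ρ i ∈ A i}
          = cylProb κ n (Measure.dirac s) A := fun s => P_cyl κ P hP (Measure.dirac s) hA
      simp only [this]
      have : {ρ : ℕ → S | ρ k ∈ C} ∩ θ ⁻¹' {ρ | ∀ i ≤ n, ρ i ∈ A i}
          = {ρ | ρ k ∈ C ∧ θ ρ ∈ {ρ | ∀ i ≤ n, ρ i ∈ A i}} := by
        ext ρ; simp [Set.mem_inter_iff]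
      rw [← key n A hA, this]
    · rw [hLapp MeasurableSet.univ, hRapp MeasurableSet.univ]
      have h1 : {ρ : ℕ → S | ρ k ∈ C ∧ θ ρ ∈ Set.univ} = {ρ | ρ k ∈ C} := by
        ext ρ; simp
      rw [h1]
      have h2 : ∀ s, P (Measure.dirac s) (Set.univ : Set (ℕ → S)) = 1 := by
        intro s
        haveI := P_prob κ P hP (Measure.dirac s)
        exact measure_univ
      simp only [h2]
      rw [setLIntegral_one]
      have hset : {ρ : ℕ → S | ρ k ∈ C}
          = {ρ | ∀ i ≤ k + 0, ρ i ∈ (fun i => if i < k then Set.univ else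
              ((fun _ => C) : ℕ → Set S) (i - k)) i} := by
        ext ρ
        simp only [Set.mem_setOf_eq, Nat.add_zero]
        constructor
        · intro h i hi
          by_cases hik : i < k
          · simp [hik]
          · have : i = k := by omega
            subst this
            simp [hik, h]
        · intro h
          have := h k le_rfl
          simpa using this
      rw [hset, P_cyl κ P hP μ (by
          intro i
          by_cases h : i < k <;> simp [h, hC]),
        cylProb_prefixUniv κ k 0 μ _ (fun _ => hC), ← hν]
      rfl
  have : P μ {ρ | ρ k ∈ C ∧ (fun i => ρ (k + i)) ∈ E} = L E := (hLapp hE).symm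
  rw [this, hLR, hRapp hE]

lemma P_eval (k : ℕ) {C : Set S} (hC : MeasurableSet C) (μ : Measure S)
    [IsProbabilityMeasure μ] :
    P μ {ρ | ρ k ∈ C} = (μ.bind (kpow κ k)) C := by
  have := markov κ P hP k hC MeasurableSet.univ μ
  have h1 : {ρ : ℕ → S | ρ k ∈ C ∧ (fun i => ρ (k + i)) ∈ Set.univ} = {ρ | ρ k ∈ C} := by
    ext ρ; simp
  rw [h1] at this
  rw [this]
  have h2 : ∀ s, P (Measure.dirac s) (Set.univ : Set (ℕ → S)) = 1 := by
    intro s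
    haveI := P_prob κ P hP (Measure.dirac s)
    exact measure_univ
  simp only [h2]
  exact setLIntegral_one C

/-- From states of `C` the event `E` has probability zero, so hitting `C` and then
realising `E` afterwards has probability zero. -/
lemma markov_null (k : ℕ) {C : Set S} (hC : MeasurableSet C) {E : Set (ℕ → S)}
    (hE : MeasurableSet E) (h0 : ∀ s ∈ C, P (Measure.dirac s) E = 0)
    (μ : Measure S) [IsProbabilityMeasure μ] :
    P μ {ρ | ρ k ∈ C ∧ (fun i => ρ (k + i)) ∈ E} = 0 := by
  rw [markov κ P hP k hC hE μ]
  rw [setLIntegral_congr_fun hC (show EqOn (fun s => P (Measure.dirac s) E) (fun _ => 0) C from h0)]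
  simp

lemma reach_avoid_null {C D : Set S} (hC : MeasurableSet C) (hD : MeasurableSet D)
    (h0 : ∀ s ∈ C, P (Measure.dirac s) (evF D) = 0)
    (μ : Measure S) [IsProbabilityMeasure μ] :
    P μ {ρ | ∃ k, ρ k ∈ C ∧ ∃ j, k ≤ j ∧ ρ j ∈ D} = 0 := by
  haveI := P_prob κ P hP μ
  refine le_antisymm ?_ (zero_le)
  have hsub : {ρ : ℕ → S | ∃ k, ρ k ∈ C ∧ ∃ j, k ≤ j ∧ ρ j ∈ D}
      ⊆ ⋃ k, {ρ | ρ k ∈ C ∧ (fun i => ρ (k + i)) ∈ evF D} := by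
    rintro ρ ⟨k, hk, j, hkj, hj⟩
    refine Set.mem_iUnion.2 ⟨k, hk, ⟨j - k, ?_⟩⟩
    show ρ (k + (j - k)) ∈ D
    have : k + (j - k) = j := by omega
    rw [this]; exact hj
  calc P μ _ ≤ P μ (⋃ k, {ρ | ρ k ∈ C ∧ (fun i => ρ (k + i)) ∈ evF D}) := measure_mono hsub
    _ = 0 := measure_iUnion_null fun k =>
        markov_null κ P hP k hC (measurableSet_evF hD) h0 μ

/-- A.s. paths starting in the avoid-set of `D` stay in it. -/
lemma avoid_closed {D : Set S} (hD : MeasurableSet D) {s : S} (hs : s ∈ avoid P D) :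
    P (Measure.dirac s) (evF (avoid P D)ᶜ) = 0 := by
  haveI := P_prob κ P hP (Measure.dirac s)
  set C := avoid P D with hCdef
  have hCm : MeasurableSet C := measurableSet_avoid κ P hP hD
  have hsub : evF Cᶜ = ⋃ j, {ρ : ℕ → S | ρ j ∈ Cᶜ} := by
    ext ρ; simp [evF]
  rw [hsub]
  refine measure_iUnion_null fun j => ?_
  by_contra hpos
  set ν := (Measure.dirac s).bind (kpow κ j) with hν
  -- the event {ρ j ∈ Cᶜ ∧ future hits D} is contained in evF D which has measure 0
  have hle : P (Measure.dirac s) {ρ | ρ j ∈ Cᶜ ∧ (fun i => ρ (j + i)) ∈ evF D} = 0 := by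
    refine le_antisymm (le_trans (measure_mono ?_) (le_of_eq hs)) (zero_le)
    rintro ρ ⟨_, ⟨m, hm⟩⟩
    exact ⟨j + m, hm⟩
  rw [markov κ P hP j hCm.compl (measurableSet_evF hD) (Measure.dirac s)] at hle
  -- so the integrand is zero a.e., but it is positive everywhere on Cᶜ
  have hf : Measurable (fun t => P (Measure.dirac t) (evF D)) :=
    measurable_P_dirac_apply κ P hP (measurableSet_evF hD)
  rw [lintegral_eq_zero_iff hf] at hle
  have hae : ∀ᵐ t ∂(ν.restrict Cᶜ), False := by
    filter_upwards [hle, ae_restrict_mem hCm.compl] with t ht htC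
    exact htC ht
  have : ν.restrict Cᶜ Set.univ = 0 := by
    simpa using hae
  rw [Measure.restrict_apply_univ] at this
  have hνeq : P (Measure.dirac s) {ρ : ℕ → S | ρ j ∈ Cᶜ} = ν Cᶜ :=
    P_eval κ P hP j hCm.compl (Measure.dirac s)
  rw [hνeq, this] at hpos
  exact hpos rfl

end Markov
section Main

open Set

theorem statement_19' {S : Type*} [MeasurableSpace S]
    (κ : Kernel S S) [IsMarkovKernel κ]
    (P : Measure S → Measure (ℕ → S)) (hP : IsPathMeasure κ P)
    (μ : Measure S) (hμ : IsProbabilityMeasure μ)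
    (B : Set S) (hB : MeasurableSet B)
    (hpd : PersistentlyDecisive P μ B)
    (hd : Decisive P μ (avoid P B)) :
    Monotone (fun n : ℕ => P μ (evFle n (avoid P (avoid P B)))) ∧
    Antitone (fun n : ℕ => 1 - P μ (evFle n (avoid P B))) ∧
    (∀ n : ℕ, P μ (evFle n (avoid P (avoid P B))) ≤ 1 - P μ (evFle n (avoid P B))) ∧
    Tendsto (fun n : ℕ => P μ (evFle n (avoid P (avoid P B)))) atTop (𝓝 (P μ (evGF B))) ∧
    Tendsto (fun n : ℕ => 1 - P μ (evFle n (avoid P B))) atTop (𝓝 (P μ (evGF B))) ∧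
    Tendsto (fun n : ℕ => P μ (evFle n (avoid P (avoid P B))) + P μ (evFle n (avoid P B)))
      atTop (𝓝 1) := by
  haveI := hμ
  haveI hPμ : IsProbabilityMeasure (P μ) := P_prob κ P hP μ
  have hA1 : MeasurableSet (avoid P B) := measurableSet_avoid κ P hP hB
  have hA2 : MeasurableSet (avoid P (avoid P B)) := measurableSet_avoid κ P hP hA1
  -- the two avoid-sets are disjoint
  have hdisj : avoid P (avoid P B) ⊆ (avoid P B)ᶜ := by
    intro s hs2 hs1
    haveI := P_prob κ P hP (Measure.dirac s)
    have h1 : P (Measure.dirac s) {ρ | ρ 0 ∈ avoid P B} = 1 := by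
      have hset : {ρ : ℕ → S | ρ 0 ∈ avoid P B}
          = {ρ | ∀ i ≤ 0, ρ i ∈ (fun _ => avoid P B : ℕ → Set S) i} := by
        ext ρ
        simp only [Set.mem_setOf_eq]
        constructor
        · intro h i hi
          have : i = 0 := Nat.le_zero.mp hi
          rw [this]; exact h
        · intro h; exact h 0 le_rfl
      rw [hset, P_cyl κ P hP (Measure.dirac s) (fun _ => hA1)]
      show Measure.dirac s (avoid P B) = 1
      rw [Measure.dirac_apply' _ hA1]
      simp [hs1]
    have h2 : P (Measure.dirac s) (evF (avoid P B)) = 0 := hs2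
    have h3 : {ρ : ℕ → S | ρ 0 ∈ avoid P B} ⊆ evF (avoid P B) := fun ρ h => ⟨0, h⟩
    have := measure_mono h3 (μ := P (Measure.dirac s))
    rw [h1, h2] at this
    exact absurd this (not_le.mpr zero_lt_one)
  -- Fact 1 : GF B ∩ F Ã is null
  have fact1 : P μ (evGF B ∩ evF (avoid P B)) = 0 := by
    refine measure_mono_null ?_ (reach_avoid_null κ P hP hA1 hB (fun s hs => hs) μ)
    rintro ρ ⟨hgf, k, hk⟩
    obtain ⟨j, hkj, hj⟩ := hgf k
    exact ⟨k, hk, j, hkj, hj⟩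
  -- Fact 2 : F Ã̃ ∩ F Ã is null
  have fact2 : P μ (evF (avoid P (avoid P B)) ∩ evF (avoid P B)) = 0 := by
    have h1 : P μ {ρ | ∃ k, ρ k ∈ avoid P (avoid P B) ∧ ∃ j, k ≤ j ∧ ρ j ∈ avoid P B} = 0 :=
      reach_avoid_null κ P hP hA2 hA1 (fun s hs => hs) μ
    have h2 : P μ {ρ | ∃ k, ρ k ∈ avoid P B ∧ ∃ j, k ≤ j ∧ ρ j ∈ (avoid P B)ᶜ} = 0 :=
      reach_avoid_null κ P hP hA1 hA1.compl
        (fun s hs => avoid_closed κ P hP hB hs) μ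
    refine measure_mono_null ?_ (measure_union_null h1 h2)
    rintro ρ ⟨⟨k, hk2⟩, ⟨j, hj⟩⟩
    rcases le_or_gt k j with h | h
    · exact Or.inl ⟨k, hk2, j, h, hj⟩
    · exact Or.inr ⟨j, hj, k, le_of_lt h, hdisj hk2⟩
  -- Fact 3 : GF B ∪ F Ã has full measure (persistent decisiveness)
  have fact3 : P μ (evGF B ∪ evF (avoid P B)) = 1 := by
    have hXm : ∀ p : ℕ, MeasurableSet (evFge p B ∪ evFge p (avoid P B)) := fun p =>
      (measurableSet_evFge hB).union (measurableSet_evFge hA1)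
    have hX : P μ (⋂ p, (evFge p B ∪ evFge p (avoid P B))) = 1 := by
      rw [← prob_compl_eq_zero_iff (MeasurableSet.iInter hXm)]
      rw [Set.compl_iInter]
      refine measure_iUnion_null fun p => ?_
      rw [prob_compl_eq_zero_iff (hXm p)]
      exact hpd p
    refine le_antisymm prob_le_one ?_
    rw [← hX]
    refine measure_mono ?_
    intro ρ hρ
    by_cases hF : ρ ∈ evF (avoid P B)
    · exact Or.inr hF
    · refine Or.inl ?_
      intro n
      have := Set.mem_iInter.mp hρ n
      rcases this with h | h
      · exact h
      · obtain ⟨k, _, hk⟩ := h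
        exact absurd ⟨k, hk⟩ hF
  -- Fact 4 : F Ã̃ ∪ F Ã has full measure (decisiveness for Ã)
  have fact4 : P μ (evF (avoid P (avoid P B)) ∪ evF (avoid P B)) = 1 := by
    rw [Set.union_comm]; exact hd
  -- arithmetic
  have e1 : P μ (evGF B) + P μ (evF (avoid P B)) = 1 := by
    have := measure_union_add_inter (μ := P μ) (evGF B) (measurableSet_evF hA1)
    rw [fact3, fact1, add_zero] at this
    exact this.symm
  have e2 : P μ (evF (avoid P (avoid P B))) + P μ (evF (avoid P B)) = 1 := by
    have := measure_union_add_inter (μ := P μ) (evF (avoid P (avoid P B)))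
      (measurableSet_evF hA1)
    rw [fact4, fact2, add_zero] at this
    exact this.symm
  have ha_top : P μ (evF (avoid P B)) ≠ ⊤ := measure_ne_top _ _
  have hg : P μ (evGF B) = 1 - P μ (evF (avoid P B)) := ENNReal.eq_sub_of_add_eq ha_top e1
  have hy : P μ (evF (avoid P (avoid P B))) = P μ (evGF B) :=
    (ENNReal.eq_sub_of_add_eq ha_top e2).trans hg.symm
  -- basic facts about evFle
  have hmono : ∀ C : Set S, Monotone (fun n => evFle n C) := by
    intro C m n h ρ hρ
    obtain ⟨k, hk, hρk⟩ := hρ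
    exact ⟨k, hk.trans h, hρk⟩
  have hUn : ∀ C : Set S, (⋃ n, evFle n C) = evF C := by
    intro C
    ext ρ
    simp only [Set.mem_iUnion, evFle, evF, Set.mem_setOf_eq]
    constructor
    · rintro ⟨n, k, _, h⟩; exact ⟨k, h⟩
    · rintro ⟨k, h⟩; exact ⟨k, k, le_rfl, h⟩
  have hle_evF : ∀ (n : ℕ) (C : Set S), evFle n C ⊆ evF C := by
    rintro n C ρ ⟨k, _, h⟩; exact ⟨k, h⟩
  -- limit statements
  have hYes : Tendsto (fun n : ℕ => P μ (evFle n (avoid P (avoid P B)))) atTop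
      (𝓝 (P μ (evF (avoid P (avoid P B))))) := by
    have := tendsto_measure_iUnion_atTop (μ := P μ) (hmono (avoid P (avoid P B)))
    rwa [hUn] at this
  have hNo : Tendsto (fun n : ℕ => P μ (evFle n (avoid P B))) atTop
      (𝓝 (P μ (evF (avoid P B)))) := by
    have := tendsto_measure_iUnion_atTop (μ := P μ) (hmono (avoid P B))
    rwa [hUn] at this
  refine ⟨?_, ?_, ?_, ?_, ?_, ?_⟩
  · exact fun m n h => measure_mono (hmono _ h)
  · exact fun m n h => tsub_le_tsub_left (measure_mono (hmono _ h)) 1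
  · intro n
    refine ENNReal.le_sub_of_add_le_right (measure_ne_top _ _) ?_
    calc P μ (evFle n (avoid P (avoid P B))) + P μ (evFle n (avoid P B))
        ≤ P μ (evF (avoid P (avoid P B))) + P μ (evF (avoid P B)) :=
          add_le_add (measure_mono (hle_evF _ _)) (measure_mono (hle_evF _ _))
      _ = 1 := e2
  · rw [← hy]; exact hYes
  · rw [hg]
    exact ENNReal.Tendsto.sub tendsto_const_nhds hNo (Or.inl one_ne_top)
  · have := hYes.add hNo
    rwa [hy, e1] at this
end Main

/-- approximation scheme for repeated reachability: under `PD(μ,B)` and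
`D(μ,B̃)`, the sequences `q_n^Yes = Prob_μ(F≤n B̃̃)` and `1 − q_n^No`
(with `q_n^No = Prob_μ(F≤n B̃)`) are adjacent and both converge to `Prob_μ(GF B)`. -/
theorem statement_19 {S : Type*} [MeasurableSpace S]
    (κ : Kernel S S) [IsMarkovKernel κ]
    (P : Measure S → Measure (ℕ → S)) (hP : IsPathMeasure κ P)
    (μ : Measure S) (hμ : IsProbabilityMeasure μ)
    (B : Set S) (hB : MeasurableSet B)
    (hpd : PersistentlyDecisive P μ B)
    (hd : Decisive P μ (avoid P B)) :
    Monotone (fun n : ℕ => P μ (evFle n (avoid P (avoid P B)))) ∧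
    Antitone (fun n : ℕ => 1 - P μ (evFle n (avoid P B))) ∧
    (∀ n : ℕ, P μ (evFle n (avoid P (avoid P B))) ≤ 1 - P μ (evFle n (avoid P B))) ∧
    Tendsto (fun n : ℕ => P μ (evFle n (avoid P (avoid P B)))) atTop (𝓝 (P μ (evGF B))) ∧
    Tendsto (fun n : ℕ => 1 - P μ (evFle n (avoid P B))) atTop (𝓝 (P μ (evGF B))) ∧
    Tendsto (fun n : ℕ => P μ (evFle n (avoid P (avoid P B))) + P μ (evFle n (avoid P B)))
      atTop (𝓝 1) := by
  exact statement_19' κ P hP μ hμ B hB hpd hd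

end STS
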